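/- Under the stated assumptions, the block component W^{−−} : H₋⁻ → H₊⁻ of W and the operator ϱ restricted to ker P, i.e. ϱ|_{ker P} : ker P → H₋⁺ ⊕ H₊⁻, have equal index. -/

import Mathlib

/-- A bounded linear operator between Banach spaces is *Fredholm* if its kernel is
finite-dimensional and its range is closed and of finite codimension. -/
def IsFredholm {E F : Type*} [NormedAddCommGroup E] [NormedSpace ℂ E]
    [NormedAddCommGroup F] [NormedSpace ℂ F] (T : E →L[ℂ] F) : Prop :=
  FiniteDimensional ℂ (LinearMap.ker (T : E →ₗ[ℂ] F)) ∧ IsClosed (LinearMap.range (T : E →ₗ[ℂ] F) : Set F) ∧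
    FiniteDimensional ℂ (F ⧸ LinearMap.range (T : E →ₗ[ℂ] F))

/-- The index of a (Fredholm) operator: `dim ker T - codim ran T`. -/
noncomputable def fredholmIndex {E F : Type*} [NormedAddCommGroup E] [NormedSpace ℂ E]
    [NormedAddCommGroup F] [NormedSpace ℂ F] (T : E →L[ℂ] F) : ℤ :=
  (Module.finrank ℂ (LinearMap.ker (T : E →ₗ[ℂ] F)) : ℤ) - (Module.finrank ℂ (F ⧸ LinearMap.range (T : E →ₗ[ℂ] F)) : ℤ)

/-- Two bounded operators *have equal index* if either both are Fredholm with the same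
index, or neither is Fredholm. -/
def EqualIndex {E F E' F' : Type*} [NormedAddCommGroup E] [NormedSpace ℂ E]
    [NormedAddCommGroup F] [NormedSpace ℂ F] [NormedAddCommGroup E'] [NormedSpace ℂ E']
    [NormedAddCommGroup F'] [NormedSpace ℂ F'] (T : E →L[ℂ] F) (S : E' →L[ℂ] F') : Prop :=
  (IsFredholm T ∧ IsFredholm S ∧ fredholmIndex T = fredholmIndex S) ∨
    (¬ IsFredholm T ∧ ¬ IsFredholm S)

/-- The block component `π ∘ W |_q : q → ran π` of a bounded operator `W : H₋ → H₊`. -/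
noncomputable def blockComponent {Hm Hp : Type*}
    [NormedAddCommGroup Hm] [NormedSpace ℂ Hm] [NormedAddCommGroup Hp] [NormedSpace ℂ Hp]
    (π : Hp →L[ℂ] Hp) (W : Hm →L[ℂ] Hp) (q : Submodule ℂ Hm) :
    q →L[ℂ] LinearMap.range (π : Hp →ₗ[ℂ] Hp) :=
  ContinuousLinearMap.codRestrict ((π.comp W).comp (Submodule.subtypeL q))
    (LinearMap.range (π : Hp →ₗ[ℂ] Hp)) (fun x => LinearMap.mem_range_self (π : Hp →ₗ[ℂ] Hp) (W x))

/-- The operator `W := ϱ₊ ∘ ϱ₋⁻¹ : H₋ → H₊`, where `ϱ₋⁻¹ : H₋ → ker P ⊆ X` is the inverse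
of the isomorphism `rm = ϱ₋|_{ker P} : ker P ≃ H₋`. -/
noncomputable def Wop {X Y Hp Hm : Type*}
    [NormedAddCommGroup X] [NormedSpace ℂ X] [NormedAddCommGroup Y] [NormedSpace ℂ Y]
    [NormedAddCommGroup Hp] [NormedSpace ℂ Hp] [NormedAddCommGroup Hm] [NormedSpace ℂ Hm]
    (P : X →L[ℂ] Y) (ϱp : X →L[ℂ] Hp) (rm : (LinearMap.ker (P : X →ₗ[ℂ] Y)) ≃L[ℂ] Hm) :
    Hm →L[ℂ] Hp :=
  (ϱp.comp (Submodule.subtypeL (LinearMap.ker (P : X →ₗ[ℂ] Y)))).comp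
    (rm.symm : Hm →L[ℂ] LinearMap.ker (P : X →ₗ[ℂ] Y))

/-- The operator `ϱ := (π₋⁺ϱ₋) ⊕ (π₊⁻ϱ₊) : X → H₋⁺ ⊕ H₊⁻`. -/
noncomputable def rhoOp {X Hp Hm : Type*}
    [NormedAddCommGroup X] [NormedSpace ℂ X]
    [NormedAddCommGroup Hp] [NormedSpace ℂ Hp] [NormedAddCommGroup Hm] [NormedSpace ℂ Hm]
    (ϱm : X →L[ℂ] Hm) (ϱp : X →L[ℂ] Hp) (πmp : Hm →L[ℂ] Hm) (πpm : Hp →L[ℂ] Hp) :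
    X →L[ℂ] (LinearMap.range (πmp : Hm →ₗ[ℂ] Hm) × LinearMap.range (πpm : Hp →ₗ[ℂ] Hp)) :=
  (ContinuousLinearMap.codRestrict (πmp.comp ϱm) (LinearMap.range (πmp : Hm →ₗ[ℂ] Hm))
      (fun x => LinearMap.mem_range_self (πmp : Hm →ₗ[ℂ] Hm) (ϱm x))).prod
    (ContinuousLinearMap.codRestrict (πpm.comp ϱp) (LinearMap.range (πpm : Hp →ₗ[ℂ] Hp))
      (fun x => LinearMap.mem_range_self (πpm : Hp →ₗ[ℂ] Hp) (ϱp x)))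


section helpers

variable {E F E' F' G : Type*}
  [NormedAddCommGroup E] [NormedSpace ℂ E] [NormedAddCommGroup F] [NormedSpace ℂ F]
  [NormedAddCommGroup E'] [NormedSpace ℂ E'] [NormedAddCommGroup F'] [NormedSpace ℂ F']
  [NormedAddCommGroup G] [NormedSpace ℂ G]

lemma equalIndex_of (T : E →L[ℂ] F) (S : E' →L[ℂ] F')
    (ek : (LinearMap.ker (T : E →ₗ[ℂ] F)) ≃ₗ[ℂ] (LinearMap.ker (S : E' →ₗ[ℂ] F')))
    (hr : IsClosed (LinearMap.range (T : E →ₗ[ℂ] F) : Set F) ↔ IsClosed (LinearMap.range (S : E' →ₗ[ℂ] F') : Set F'))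
    (ec : (F ⧸ LinearMap.range (T : E →ₗ[ℂ] F)) ≃ₗ[ℂ] (F' ⧸ LinearMap.range (S : E' →ₗ[ℂ] F'))) : EqualIndex T S := by
  by_cases h : IsFredholm T
  · obtain ⟨h1, h2, h3⟩ := h
    refine Or.inl ⟨⟨h1, h2, h3⟩, ⟨Module.Finite.equiv ek, hr.mp h2, Module.Finite.equiv ec⟩, ?_⟩
    unfold fredholmIndex
    rw [ek.finrank_eq, ec.finrank_eq]
  · refine Or.inr ⟨h, fun hS => h ?_⟩
    obtain ⟨h1, h2, h3⟩ := hS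
    exact ⟨Module.Finite.equiv ek.symm, hr.mpr h2, Module.Finite.equiv ec.symm⟩

lemma EqualIndex.trans {T : E →L[ℂ] F} {S : E' →L[ℂ] F'} {G' H' : Type*}
    [NormedAddCommGroup G'] [NormedSpace ℂ G'] [NormedAddCommGroup H'] [NormedSpace ℂ H']
    {R : G' →L[ℂ] H'} (h1 : EqualIndex T S) (h2 : EqualIndex S R) : EqualIndex T R := by
  rcases h1 with ⟨hT, hS, hi⟩ | ⟨hT, hS⟩ <;> rcases h2 with ⟨hS', hR, hi'⟩ | ⟨hS', hR⟩
  · exact Or.inl ⟨hT, hR, hi.trans hi'⟩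
  · exact absurd hS hS'
  · exact absurd hS' hS
  · exact Or.inr ⟨hT, hR⟩

lemma equalIndex_conj (T : E →L[ℂ] F) (e₁ : E' ≃L[ℂ] E) (e₂ : F ≃L[ℂ] F') :
    EqualIndex T ((e₂ : F →L[ℂ] F').comp (T.comp (e₁ : E' →L[ℂ] E))) := by
  set S := (e₂ : F →L[ℂ] F').comp (T.comp (e₁ : E' →L[ℂ] E)) with hSdef
  have hker : (LinearMap.ker (T : E →ₗ[ℂ] F)).map (e₁.symm.toLinearEquiv : E →ₗ[ℂ] E') = LinearMap.ker (S : E' →ₗ[ℂ] F') := by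
    ext x
    simp [hSdef, Submodule.mem_map_equiv, LinearMap.mem_ker, S]
  have hrange : (LinearMap.range (T : E →ₗ[ℂ] F)).map (e₂.toLinearEquiv : F →ₗ[ℂ] F') = LinearMap.range (S : E' →ₗ[ℂ] F') := by
    ext y
    constructor
    · rintro ⟨z, ⟨x, rfl⟩, rfl⟩
      exact ⟨e₁.symm x, by simp [hSdef]⟩
    · rintro ⟨x, rfl⟩
      exact ⟨T (e₁ x), ⟨e₁ x, rfl⟩, rfl⟩
  refine equalIndex_of T S ((e₁.symm.toLinearEquiv.submoduleMap (LinearMap.ker (T : E →ₗ[ℂ] F))).trans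
    (LinearEquiv.ofEq _ _ hker)) ?_ (Submodule.Quotient.equiv _ _ e₂.toLinearEquiv hrange)
  · rw [← hrange]
    constructor
    · intro h
      have : (↑((LinearMap.range (T : E →ₗ[ℂ] F)).map (e₂.toLinearEquiv : F →ₗ[ℂ] F')) : Set F') =
          e₂ '' (LinearMap.range (T : E →ₗ[ℂ] F)) := by
        simp [Submodule.map_coe]
      rw [this]
      exact e₂.toHomeomorph.isClosedMap _ h
    · intro h
      have : (↑(LinearMap.range (T : E →ₗ[ℂ] F)) : Set F) =
          e₂ ⁻¹' ((LinearMap.range (T : E →ₗ[ℂ] F)).map (e₂.toLinearEquiv : F →ₗ[ℂ] F')) := by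
        ext x; simp [Submodule.mem_map_equiv]
      rw [this]
      exact h.preimage e₂.continuous

lemma equalIndex_prodMap (S : E →L[ℂ] F) :
    EqualIndex S ((ContinuousLinearMap.id ℂ G).prodMap S) := by
  set M := (ContinuousLinearMap.id ℂ G).prodMap S with hM
  have hmemker : ∀ x : G × E, x ∈ LinearMap.ker (M : G × E →ₗ[ℂ] G × F) ↔ x.1 = 0 ∧ x.2 ∈ LinearMap.ker (S : E →ₗ[ℂ] F) := by
    intro x
    simp [hM, LinearMap.mem_ker, Prod.ext_iff, M, ContinuousLinearMap.prodMap]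
  have hmemrange : ∀ y : G × F, y ∈ LinearMap.range (M : G × E →ₗ[ℂ] G × F) ↔ y.2 ∈ LinearMap.range (S : E →ₗ[ℂ] F) := by
    intro y
    constructor
    · rintro ⟨x, rfl⟩; exact ⟨x.2, rfl⟩
    · rintro ⟨x, hx⟩; exact ⟨(y.1, x), by simp [hM, Prod.ext_iff, ← hx, M, ContinuousLinearMap.prodMap]⟩
  let ek : LinearMap.ker (S : E →ₗ[ℂ] F) ≃ₗ[ℂ] LinearMap.ker (M : G × E →ₗ[ℂ] G × F) :=
    { toFun := fun x => ⟨(0, x.1), (hmemker _).mpr ⟨rfl, x.2⟩⟩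
      invFun := fun y => ⟨y.1.2, ((hmemker _).mp y.2).2⟩
      map_add' := fun x y => by ext <;> simp
      map_smul' := fun c x => by ext <;> simp
      left_inv := fun x => by ext; rfl
      right_inv := fun y => by
        ext
        · exact (((hmemker _).mp y.2).1).symm
        · rfl }
  let f : G × F →ₗ[ℂ] F ⧸ LinearMap.range (S : E →ₗ[ℂ] F) :=
    (LinearMap.range (S : E →ₗ[ℂ] F)).mkQ.comp (LinearMap.snd ℂ G F)
  have hf : Function.Surjective f := fun y => by
    obtain ⟨x, rfl⟩ := (LinearMap.range (S : E →ₗ[ℂ] F)).mkQ_surjective y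
    exact ⟨(0, x), rfl⟩
  have hkerf : LinearMap.range (M : G × E →ₗ[ℂ] G × F) = LinearMap.ker f := by
    ext y
    simp [hmemrange, f, LinearMap.mem_ker, Submodule.Quotient.mk_eq_zero]
  refine equalIndex_of S M ek ?_
    ((Submodule.quotEquivOfEq _ _ hkerf).trans (f.quotKerEquivOfSurjective hf)).symm
  have hset : (LinearMap.range (M : G × E →ₗ[ℂ] G × F) : Set (G × F)) = Set.univ ×ˢ (LinearMap.range (S : E →ₗ[ℂ] F) : Set F) := by
    ext y; simp [hmemrange, Set.mem_prod]
  rw [hset]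
  constructor
  · intro h
    exact isClosed_univ.prod h
  · intro h
    have : (LinearMap.range (S : E →ₗ[ℂ] F) : Set F) = (fun b => ((0 : G), b)) ⁻¹'
        (Set.univ ×ˢ (LinearMap.range (S : E →ₗ[ℂ] F) : Set F)) := by
      ext x; simp
    rw [this]
    exact h.preimage (by fun_prop)

end helpers

/-- The block component `W⁻⁻ : H₋⁻ → H₊⁻` of `W = ϱ₊ ∘ ϱ₋⁻¹` and the restriction
`ϱ|_{ker P} : ker P → H₋⁺ ⊕ H₊⁻` of `ϱ = (π₋⁺ϱ₋) ⊕ (π₊⁻ϱ₊)` have equal index. -/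
theorem statement4
    {X Y Hp Hm : Type*}
    [NormedAddCommGroup X] [InnerProductSpace ℂ X] [CompleteSpace X]
    [NormedAddCommGroup Y] [NormedSpace ℂ Y] [CompleteSpace Y]
    [NormedAddCommGroup Hp] [NormedSpace ℂ Hp] [CompleteSpace Hp]
    [NormedAddCommGroup Hm] [NormedSpace ℂ Hm] [CompleteSpace Hm]
    (πpp πpm : Hp →L[ℂ] Hp) (πmp πmm : Hm →L[ℂ] Hm)
    (hπpp : πpp.comp πpp = πpp) (hπpm : πpm.comp πpm = πpm)
    (hπp : πpp + πpm = ContinuousLinearMap.id ℂ Hp)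
    (hπmp : πmp.comp πmp = πmp) (hπmm : πmm.comp πmm = πmm)
    (hπm : πmp + πmm = ContinuousLinearMap.id ℂ Hm)
    (P : X →L[ℂ] Y) (ϱp : X →L[ℂ] Hp) (ϱm : X →L[ℂ] Hm)
    (ep : X ≃L[ℂ] Hp × Y) (hep : ∀ u : X, ep u = (ϱp u, P u))
    (em : X ≃L[ℂ] Hm × Y) (hem : ∀ u : X, em u = (ϱm u, P u))
    (rm : (LinearMap.ker (P : X →ₗ[ℂ] Y)) ≃L[ℂ] Hm)
    (hrm : ∀ u : LinearMap.ker (P : X →ₗ[ℂ] Y), rm u = ϱm u) :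
    EqualIndex
      (blockComponent πpm (Wop P ϱp rm) (LinearMap.range (πmm : Hm →ₗ[ℂ] Hm)))
      ((rhoOp ϱm ϱp πmp πpm).comp (Submodule.subtypeL (LinearMap.ker (P : X →ₗ[ℂ] Y)))) := by
  classical
  -- pointwise projection facts
  have hadd : ∀ v : Hm, πmp v + πmm v = v := fun v => by
    have := ContinuousLinearMap.ext_iff.mp hπm v; simpa using this
  have hidemp : ∀ v : Hm, πmp (πmp v) = πmp v := fun v => by
    have := ContinuousLinearMap.ext_iff.mp hπmp v; simpa using this
  have hmpmm : ∀ v : Hm, πmp (πmm v) = 0 := fun v => by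
    have h2 := congrArg πmp (hadd v)
    rw [map_add, hidemp] at h2
    exact add_eq_left.mp h2
  have hidemm : ∀ v : Hm, πmm (πmm v) = πmm v := fun v => by
    have := ContinuousLinearMap.ext_iff.mp hπmm v; simpa using this
  have hmmmp : ∀ v : Hm, πmm (πmp v) = 0 := fun v => by
    have h2 := congrArg πmm (hadd v)
    rw [map_add, hidemm] at h2

    exact add_eq_right.mp h2
  set Mp := LinearMap.range (πmp : Hm →ₗ[ℂ] Hm) with hMp
  set Mm := LinearMap.range (πmm : Hm →ₗ[ℂ] Hm) with hMm
  set Pm := LinearMap.range (πpm : Hp →ₗ[ℂ] Hp) with hPm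
  set W := Wop P ϱp rm with hWdef
  set R := blockComponent πpm W Mm with hRdef
  set B := blockComponent πpm W Mp with hBdef
  set T := (rhoOp ϱm ϱp πmp πpm).comp (Submodule.subtypeL (LinearMap.ker (P : X →ₗ[ℂ] Y))) with hTdef
  -- facts about elements of the ranges
  have hfixp : ∀ a : Mp, πmp (a : Hm) = a := by
    rintro ⟨a, x, rfl⟩; exact hidemp x
  have hkillm : ∀ b : Mm, πmp (b : Hm) = 0 := by
    rintro ⟨b, x, rfl⟩; exact hmpmm x
  have hfixm : ∀ b : Mm, πmm (b : Hm) = b := by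
    rintro ⟨b, x, rfl⟩; exact hidemm x
  have hkillp : ∀ a : Mp, πmm (a : Hm) = 0 := by
    rintro ⟨a, x, rfl⟩; exact hmmmp x
  -- the decomposition Hm ≃ Mp × Mm
  let e0 : (Mp × Mm) ≃L[ℂ] Hm := ContinuousLinearEquiv.equivOfInverse
    ((Mp.subtypeL).coprod (Mm.subtypeL))
    ((ContinuousLinearMap.codRestrict πmp Mp (fun x => LinearMap.mem_range_self (πmp : Hm →ₗ[ℂ] Hm) x)).prod
      (ContinuousLinearMap.codRestrict πmm Mm (fun x => LinearMap.mem_range_self (πmm : Hm →ₗ[ℂ] Hm) x)))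
    (fun x => by
      refine Prod.ext (Subtype.ext ?_) (Subtype.ext ?_) <;>
        simp [map_add, hfixp x.1, hkillm x.2, hfixm x.2, hkillp x.1]
    )
    (fun v => by simp [hadd v])
  let E₁ : (Mp × Mm) ≃L[ℂ] LinearMap.ker (P : X →ₗ[ℂ] Y) := e0.trans rm.symm
  -- the shear equivalence
  let C : (Mp × Pm) ≃L[ℂ] (Mp × Pm) := ContinuousLinearEquiv.equivOfInverse
    ((ContinuousLinearMap.fst ℂ Mp Pm).prod
      (B.comp (ContinuousLinearMap.fst ℂ Mp Pm) + ContinuousLinearMap.snd ℂ Mp Pm))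
    ((ContinuousLinearMap.fst ℂ Mp Pm).prod
      (ContinuousLinearMap.snd ℂ Mp Pm - B.comp (ContinuousLinearMap.fst ℂ Mp Pm)))
    (fun x => by ext <;> simp) (fun x => by ext <;> simp)
  set M := (ContinuousLinearMap.id ℂ Mp).prodMap R with hMdef
  -- the key algebraic identity
  have hkey : T.comp (E₁ : (Mp × Mm) →L[ℂ] LinearMap.ker (P : X →ₗ[ℂ] Y)) = (C : (Mp × Pm) →L[ℂ] (Mp × Pm)).comp M := by
    refine ContinuousLinearMap.ext fun x => ?_
    have hu : ∀ z : Hm, (ϱm (rm.symm z : X)) = z := fun z => by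
      rw [← hrm (rm.symm z)]
      simp
    have he0 : (e0 x : Hm) = (x.1 : Hm) + (x.2 : Hm) := rfl
    refine Prod.ext (Subtype.ext ?_) (Subtype.ext ?_)
    · show πmp (ϱm ((rm.symm (e0 x) : LinearMap.ker (P : X →ₗ[ℂ] Y)) : X)) = (x.1 : Hm)
      rw [hu, he0, map_add, hfixp x.1, hkillm x.2, add_zero]
    · show πpm (ϱp ((rm.symm (e0 x) : LinearMap.ker (P : X →ₗ[ℂ] Y)) : X)) = πpm (W (x.1 : Hm)) + πpm (W (x.2 : Hm))
      have hWv : ∀ z : Hm, W z = ϱp ((rm.symm z : LinearMap.ker (P : X →ₗ[ℂ] Y)) : X) := fun z => rfl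
      rw [← hWv, he0, map_add, map_add]
  -- assemble
  have h1 : EqualIndex R M := equalIndex_prodMap R
  have h2 : EqualIndex M T := by
    have hconj := equalIndex_conj M E₁.symm C
    have heq : (C : (Mp × Pm) →L[ℂ] (Mp × Pm)).comp
        (M.comp (E₁.symm : LinearMap.ker (P : X →ₗ[ℂ] Y) →L[ℂ] (Mp × Mm))) = T := by
      refine ContinuousLinearMap.ext fun v => ?_
      have := ContinuousLinearMap.ext_iff.mp hkey (E₁.symm v)
      simp only [ContinuousLinearMap.comp_apply, ContinuousLinearMap.coe_coe] at this ⊢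
      have h3 : ((E₁.symm : LinearMap.ker (P : X →ₗ[ℂ] Y) →L[ℂ] (Mp × Mm)) v) = E₁.symm v := rfl
      rw [h3, ← this]
      congr 1
      exact E₁.apply_symm_apply v
    rwa [heq] at hconj
  exact h1.trans h2
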